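/- EdgeConv is permutation equivariant: for every edge function φ : (Fin F → ℝ) × (Fin F → ℝ) → (Fin d → ℝ), every output function ρ : (Fin d → ℝ) × (Fin d → ℝ) → (Fin d' → ℝ), every x : Fin N → (Fin F → ℝ), and every permutation σ of Fin N, the EdgeConv output computed from the reordered input x ∘ σ with the permuted neighbor map k^σ satisfies Y(x ∘ σ, k^σ)_i = Y(x, k)_{σ(i)} for all i : Fin N; equivalently, Y(x ∘ σ, k^σ) = Y(x, k) ∘ σ. -/
import Mathlib


open Finset

/-- The permuted neighbor map `k^σ i j = σ⁻¹ (k (σ i) j)`. -/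
def permNbr {N K : ℕ} (σ : Equiv.Perm (Fin N)) (k : Fin N → Fin K → Fin N) :
    Fin N → Fin K → Fin N :=
  fun i j => σ⁻¹ (k (σ i) j)

/-- The EdgeConv map: `Y(x, k)_i = ρ(m_i, a_i)` where the edge features are
`e_i(j) = φ(x_i, x_{k i j} − x_i)`, `m_i` is their channel-wise maximum and
`a_i` their channel-wise average `(1/K) Σ_j e_i(j)`. -/
noncomputable def edgeConv {N K F d d' : ℕ} (hK : 0 < K)
    (φ : (Fin F → ℝ) × (Fin F → ℝ) → (Fin d → ℝ))
    (ρ : (Fin d → ℝ) × (Fin d → ℝ) → (Fin d' → ℝ))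
    (x : Fin N → Fin F → ℝ) (k : Fin N → Fin K → Fin N) :
    Fin N → Fin d' → ℝ :=
  fun i =>
    let e : Fin K → Fin d → ℝ := fun j => φ (x i, x (k i j) - x i)
    ρ ((fun c => Finset.univ.sup' ⟨⟨0, hK⟩, Finset.mem_univ _⟩ fun j => e j c),
       (1 / (K : ℝ)) • ∑ j : Fin K, e j)

/-- EdgeConv is permutation equivariant:
`Y(x ∘ σ, k^σ)_i = Y(x, k)_{σ(i)}` for all `i`; equivalently
`Y(x ∘ σ, k^σ) = Y(x, k) ∘ σ`. -/
theorem edgeConv_perm_equivariant {N K F d d' : ℕ} (hN : 0 < N) (hK : 0 < K)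
    (hF : 0 < F) (hd : 0 < d) (hd' : 0 < d') (k : Fin N → Fin K → Fin N)
    (φ : (Fin F → ℝ) × (Fin F → ℝ) → (Fin d → ℝ))
    (ρ : (Fin d → ℝ) × (Fin d → ℝ) → (Fin d' → ℝ))
    (x : Fin N → Fin F → ℝ) (σ : Equiv.Perm (Fin N)) :
    (∀ i : Fin N, edgeConv hK φ ρ (x ∘ σ) (permNbr σ k) i = edgeConv hK φ ρ x k (σ i)) ∧
    edgeConv hK φ ρ (x ∘ σ) (permNbr σ k) = edgeConv hK φ ρ x k ∘ σ := by
  have h : ∀ i : Fin N, edgeConv hK φ ρ (x ∘ σ) (permNbr σ k) i = edgeConv hK φ ρ x k (σ i) := by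
    intro i
    simp [edgeConv, permNbr, Function.comp]
  exact ⟨h, funext h⟩
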